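/- For the (π/2)-Yao graph of n points drawn independently and uniformly at random from 𝔻^2 (the unit square rotated by π/4), for every constant d > 4, lim_{n→∞} Pr{ some edge of the (π/2)-Yao graph has Euclidean length greater than √(d·log n / n) } = 0. -/

import Mathlib

open MeasureTheory Filter

noncomputable section

/-- The Euclidean plane. -/
abbrev E2 := EuclideanSpace ℝ (Fin 2)

/-- `w` lies in the `q`-th cone of `u`: the angle of `w - u`, measured counterclockwise
from the positive x-direction, lies in `[qπ/2, (q+1)π/2)`.  We express this condition on
each quadrant directly by sign conditions on the coordinates of `w - u`. -/
def inCone (u w : E2) (q : Fin 4) : Prop :=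
  (q = 0 ∧ 0 < w 0 - u 0 ∧ 0 ≤ w 1 - u 1) ∨
  (q = 1 ∧ w 0 - u 0 ≤ 0 ∧ 0 < w 1 - u 1) ∨
  (q = 2 ∧ w 0 - u 0 < 0 ∧ w 1 - u 1 ≤ 0) ∨
  (q = 3 ∧ 0 ≤ w 0 - u 0 ∧ w 1 - u 1 < 0)

/-- `X j` is chosen by `X i` in the `(π/2)`-Yao graph: for some cone of `X i` containing
`X j`, no point of the set lying in that cone is strictly closer to `X i` than `X j`. -/
def yaoDir {n : ℕ} (X : Fin n → E2) (i j : Fin n) : Prop :=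
  ∃ q : Fin 4, inCone (X i) (X j) q ∧
    ∀ k : Fin n, inCone (X i) (X k) q → dist (X i) (X j) ≤ dist (X i) (X k)

/-- Undirected adjacency in the `(π/2)`-Yao graph. -/
def yaoAdj {n : ℕ} (X : Fin n → E2) (i j : Fin n) : Prop :=
  yaoDir X i j ∨ yaoDir X j i

/-- Degree of vertex `i` in the `(π/2)`-Yao graph of the points `X`. -/
def yaoDeg {n : ℕ} (X : Fin n → E2) (i : Fin n) : ℕ :=
  Nat.card {j : Fin n // yaoAdj X i j}

/-- Maximal degree of the `(π/2)`-Yao graph of the points `X`. -/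
def yaoMaxDeg {n : ℕ} (X : Fin n → E2) : ℕ :=
  Finset.univ.sup (yaoDeg X)

/-- `𝔻²`: the unit square rotated by `π/4`, i.e. `{(x,y) : |x| + |y| ≤ √2/2}`. -/
def rotatedSquare : Set E2 := {p | |p 0| + |p 1| ≤ Real.sqrt 2 / 2}

/-- The uniform distribution on `𝔻²` (which has area 1). -/
def unifD2 : Measure E2 := volume.restrict rotatedSquare

/-- `n` points drawn independently and uniformly from `𝔻²`. -/
def Pn (n : ℕ) : Measure (Fin n → E2) := Measure.pi fun _ => unifD2

/-! ### Auxiliary material for the proof -/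

section Aux

open Set

/-- Coordinates on the plane, as a measurable equivalence with `ℝ × ℝ`. -/
def Phi : E2 ≃ᵐ ℝ × ℝ :=
  (MeasurableEquiv.toLp 2 (Fin 2 → ℝ)).symm.trans (MeasurableEquiv.piFinTwo fun _ => ℝ)

lemma measurePreserving_Phi : MeasurePreserving Phi volume volume := by
  have h1 := EuclideanSpace.volume_preserving_symm_measurableEquiv_toLp (Fin 2)
  have h2 := measurePreserving_piFinTwo (fun _ : Fin 2 => (volume : Measure ℝ))
  have h := h2.comp h1
  rw [← Measure.volume_eq_prod] at h
  exact h

lemma measurable_coord (c : Fin 2) : Measurable fun p : E2 => p c :=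
  (measurable_pi_apply c).comp (WithLp.measurable_ofLp 2 (Fin 2 → ℝ))

/-- Membership in the rotated square in terms of four linear inequalities. -/
lemma mem_rotatedSquare_iff {p : E2} :
    p ∈ rotatedSquare ↔ p 0 + p 1 ≤ Real.sqrt 2 / 2 ∧ p 0 - p 1 ≤ Real.sqrt 2 / 2 ∧
      -p 0 + p 1 ≤ Real.sqrt 2 / 2 ∧ -p 0 - p 1 ≤ Real.sqrt 2 / 2 := by
  unfold rotatedSquare
  simp only [mem_setOf_eq]
  constructor
  · intro h
    have a1 := le_abs_self (p 0); have a2 := neg_abs_le (p 0)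
    have b1 := le_abs_self (p 1); have b2 := neg_abs_le (p 1)
    exact ⟨by linarith, by linarith, by linarith, by linarith⟩
  · rintro ⟨h1, h2, h3, h4⟩
    rcases abs_cases (p 0) with ⟨e, _⟩ | ⟨e, _⟩ <;>
      rcases abs_cases (p 1) with ⟨f, _⟩ | ⟨f, _⟩ <;> rw [e, f] <;> linarith

lemma measurableSet_rotatedSquare : MeasurableSet rotatedSquare :=
  measurableSet_le ((measurable_coord 0).abs.add (measurable_coord 1).abs) measurable_const

/-- A distance bound by the ℓ¹ norm of the coordinate differences. -/
lemma dist_le_sum_abs (u w : E2) : dist u w ≤ |w 0 - u 0| + |w 1 - u 1| := by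
  have hd : dist u w = Real.sqrt ((u 0 - w 0)^2 + (u 1 - w 1)^2) := by
    rw [EuclideanSpace.dist_eq]; simp [Fin.sum_univ_two, Real.dist_eq, sq_abs]
  rw [hd]
  have h1 : (u 0 - w 0)^2 + (u 1 - w 1)^2 ≤ (|w 0 - u 0| + |w 1 - u 1|)^2 := by
    have e1 : |w 0 - u 0|^2 = (w 0 - u 0)^2 := sq_abs _
    have e2 : |w 1 - u 1|^2 = (w 1 - u 1)^2 := sq_abs _
    nlinarith [abs_nonneg (w 0 - u 0), abs_nonneg (w 1 - u 1)]
  calc Real.sqrt ((u 0 - w 0)^2 + (u 1 - w 1)^2)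
      ≤ Real.sqrt ((|w 0 - u 0| + |w 1 - u 1|)^2) := Real.sqrt_le_sqrt h1
    _ = |w 0 - u 0| + |w 1 - u 1| :=
        Real.sqrt_sq (by positivity)

lemma dist_le_of_coord {u w : E2} {a b r : ℝ} (ha : |w 0 - u 0| ≤ a) (hb : |w 1 - u 1| ≤ b)
    (hab : a + b ≤ r) : dist u w ≤ r := by
  have := dist_le_sum_abs u w; linarith

/-! #### The four cones -/

lemma inCone_zero {u w : E2} : inCone u w 0 ↔ 0 < w 0 - u 0 ∧ 0 ≤ w 1 - u 1 := by
  constructor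
  · rintro (⟨_, h⟩ | ⟨h, _⟩ | ⟨h, _⟩ | ⟨h, _⟩)
    · exact h
    all_goals exact absurd h (by decide)
  · exact fun h => Or.inl ⟨rfl, h⟩

lemma inCone_one {u w : E2} : inCone u w 1 ↔ w 0 - u 0 ≤ 0 ∧ 0 < w 1 - u 1 := by
  constructor
  · rintro (⟨h, _⟩ | ⟨_, h⟩ | ⟨h, _⟩ | ⟨h, _⟩)
    · exact absurd h (by decide)
    · exact h
    all_goals exact absurd h (by decide)
  · exact fun h => Or.inr (Or.inl ⟨rfl, h⟩)

lemma inCone_two {u w : E2} : inCone u w 2 ↔ w 0 - u 0 < 0 ∧ w 1 - u 1 ≤ 0 := by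
  constructor
  · rintro (⟨h, _⟩ | ⟨h, _⟩ | ⟨_, h⟩ | ⟨h, _⟩)
    · exact absurd h (by decide)
    · exact absurd h (by decide)
    · exact h
    · exact absurd h (by decide)
  · exact fun h => Or.inr (Or.inr (Or.inl ⟨rfl, h⟩))

lemma inCone_three {u w : E2} : inCone u w 3 ↔ 0 ≤ w 0 - u 0 ∧ w 1 - u 1 < 0 := by
  constructor
  · rintro (⟨h, _⟩ | ⟨h, _⟩ | ⟨h, _⟩ | ⟨_, h⟩)
    · exact absurd h (by decide)
    · exact absurd h (by decide)
    · exact absurd h (by decide)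
    · exact h
  · exact fun h => Or.inr (Or.inr (Or.inr ⟨rfl, h⟩))

/-- The region of the plane whose emptiness is forced by a long Yao edge: the part of a cone
at `u` within distance `r`. -/
def coneSlab (u : E2) (q : Fin 4) (r : ℝ) : Set E2 := {w | inCone u w q ∧ dist u w ≤ r}


lemma measurableSet_setOf_imp {α : Type*} [MeasurableSpace α] (P : Prop) {f : α → Prop}
    (hf : MeasurableSet {x | f x}) : MeasurableSet {x | P → f x} := by
  by_cases h : P
  · simp only [h, true_implies]; exact hf
  · simp only [h, false_implies, setOf_true]; exact MeasurableSet.univ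

lemma measurableSet_setOf_and {α : Type*} [MeasurableSpace α] (P : Prop) {f : α → Prop}
    (hf : MeasurableSet {x | f x}) : MeasurableSet {x | P ∧ f x} := by
  by_cases h : P
  · simp only [h, true_and]; exact hf
  · simp only [h, false_and, setOf_false]; exact MeasurableSet.empty

lemma measurableSet_coneSlab (u : E2) (q : Fin 4) (r : ℝ) : MeasurableSet (coneSlab u q r) := by
  have hdist : MeasurableSet {w : E2 | dist u w ≤ r} :=
    measurableSet_le (measurable_const.dist measurable_id) measurable_const
  have hcone : MeasurableSet {w : E2 | inCone u w q} := by
    simp only [inCone, setOf_or]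
    refine MeasurableSet.union ?_ (MeasurableSet.union ?_ (MeasurableSet.union ?_ ?_))
    · exact measurableSet_setOf_and _
        ((measurableSet_lt measurable_const ((measurable_coord 0).sub_const _)).inter
          (measurableSet_le measurable_const ((measurable_coord 1).sub_const _)))
    · exact measurableSet_setOf_and _
        ((measurableSet_le ((measurable_coord 0).sub_const _) measurable_const).inter
          (measurableSet_lt measurable_const ((measurable_coord 1).sub_const _)))
    · exact measurableSet_setOf_and _
        ((measurableSet_lt ((measurable_coord 0).sub_const _) measurable_const).inter
          (measurableSet_le ((measurable_coord 1).sub_const _) measurable_const))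
    · exact measurableSet_setOf_and _
        ((measurableSet_le measurable_const ((measurable_coord 0).sub_const _)).inter
          (measurableSet_lt ((measurable_coord 1).sub_const _) measurable_const))
  exact hcone.inter hdist

/-! #### Volume computations -/

lemma volume_T0 {r : ℝ} (hr : 0 ≤ r) :
    volume {q : ℝ × ℝ | 0 ≤ q.1 ∧ q.1 ≤ q.2 ∧ q.1 + q.2 ≤ r} = ENNReal.ofReal (r^2/4) := by
  have hmeas : MeasurableSet {q : ℝ × ℝ | 0 ≤ q.1 ∧ q.1 ≤ q.2 ∧ q.1 + q.2 ≤ r} := by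
    refine MeasurableSet.inter ?_ (MeasurableSet.inter ?_ ?_)
    · exact measurableSet_le measurable_const measurable_fst
    · exact measurableSet_le measurable_fst measurable_snd
    · exact measurableSet_le (measurable_fst.add measurable_snd) measurable_const
  rw [Measure.volume_eq_prod, Measure.prod_apply hmeas]
  have hvol : ∀ x : ℝ, volume (Prod.mk x ⁻¹' {q : ℝ × ℝ | 0 ≤ q.1 ∧ q.1 ≤ q.2 ∧ q.1 + q.2 ≤ r})
      = indicator (Ici (0:ℝ)) (fun x => ENNReal.ofReal (r - x - x)) x := by
    intro x
    by_cases hx : (0:ℝ) ≤ x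
    · have hset : (Prod.mk x ⁻¹' {q : ℝ × ℝ | 0 ≤ q.1 ∧ q.1 ≤ q.2 ∧ q.1 + q.2 ≤ r})
          = Icc x (r - x) := by
        ext y; simp only [mem_preimage, mem_setOf_eq, mem_Icc]
        constructor
        · rintro ⟨_, h1, h2⟩; exact ⟨h1, by linarith⟩
        · rintro ⟨h1, h2⟩; exact ⟨hx, h1, by linarith⟩
      rw [hset, indicator_of_mem (mem_Ici.mpr hx), Real.volume_Icc]
    · have hset : (Prod.mk x ⁻¹' {q : ℝ × ℝ | 0 ≤ q.1 ∧ q.1 ≤ q.2 ∧ q.1 + q.2 ≤ r})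
          = (∅ : Set ℝ) := by
        ext y; simp only [mem_preimage, mem_setOf_eq, mem_empty_iff_false, iff_false]
        rintro ⟨h0, _, _⟩; exact hx h0
      rw [hset, indicator_of_notMem (fun hc => hx (mem_Ici.mp hc)), measure_empty]
  simp_rw [hvol]
  rw [lintegral_indicator measurableSet_Ici]
  have hsplit : Ici (0:ℝ) = Icc 0 (r/2) ∪ Ioi (r/2) := by
    ext x; simp only [mem_Ici, mem_union, mem_Icc, mem_Ioi]
    constructor
    · intro hx; rcases le_or_gt x (r/2) with h | h
      · exact Or.inl ⟨hx, h⟩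
      · exact Or.inr h
    · rintro (⟨h, _⟩ | h)
      · exact h
      · linarith
  rw [hsplit, lintegral_union measurableSet_Ioi]
  swap
  · rw [Set.disjoint_left]; rintro x ⟨_, h2⟩ h3
    exact absurd h3 (not_lt.2 h2)
  have h2nd : ∫⁻ x in Ioi (r/2), ENNReal.ofReal (r - x - x) = 0 := by
    have hz : ∀ x ∈ Ioi (r/2), ENNReal.ofReal (r - x - x) = (0 : ENNReal) := by
      intro x hx
      rw [ENNReal.ofReal_eq_zero]
      simp only [mem_Ioi] at hx; linarith
    calc ∫⁻ x in Ioi (r/2), ENNReal.ofReal (r - x - x)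
        = ∫⁻ _ in Ioi (r/2), (0 : ENNReal) :=
          setLIntegral_congr_fun measurableSet_Ioi hz
      _ = 0 := lintegral_zero
  rw [h2nd, add_zero]
  have hint : IntegrableOn (fun x => r - x - x) (Icc 0 (r/2)) volume :=
    ((continuous_const.sub continuous_id).sub continuous_id).integrableOn_Icc
  rw [← ofReal_integral_eq_lintegral_ofReal hint]
  swap
  · rw [EventuallyLE, ae_restrict_iff' measurableSet_Icc]
    refine Filter.Eventually.of_forall fun x hx => ?_
    simp only [Pi.zero_apply]; rcases hx with ⟨h1, h2⟩; linarith
  congr 1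
  rw [integral_Icc_eq_integral_Ioc, ← intervalIntegral.integral_of_le (by positivity)]
  have hfun : (fun x : ℝ => r - x - x) = fun x => r - 2 * x := by funext x; ring
  rw [hfun]
  rw [intervalIntegral.integral_sub intervalIntegrable_const
    (intervalIntegral.intervalIntegrable_id.const_mul 2)]
  rw [intervalIntegral.integral_const_mul, integral_id, intervalIntegral.integral_const]
  simp; ring

lemma volume_T0' {r : ℝ} (hr : 0 ≤ r) :
    volume {q : ℝ × ℝ | 0 ≤ q.2 ∧ q.2 ≤ q.1 ∧ q.1 + q.2 ≤ r} = ENNReal.ofReal (r^2/4) := by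
  have hswap : MeasurePreserving (Prod.swap : ℝ × ℝ → ℝ × ℝ) volume volume := by
    rw [Measure.volume_eq_prod]
    exact Measure.measurePreserving_swap
  have hmeas : MeasurableSet {q : ℝ × ℝ | 0 ≤ q.1 ∧ q.1 ≤ q.2 ∧ q.1 + q.2 ≤ r} := by
    refine MeasurableSet.inter ?_ (MeasurableSet.inter ?_ ?_)
    · exact measurableSet_le measurable_const measurable_fst
    · exact measurableSet_le measurable_fst measurable_snd
    · exact measurableSet_le (measurable_fst.add measurable_snd) measurable_const
  have hpre : (Prod.swap : ℝ × ℝ → ℝ × ℝ) ⁻¹' {q : ℝ × ℝ | 0 ≤ q.1 ∧ q.1 ≤ q.2 ∧ q.1 + q.2 ≤ r}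
      = {q : ℝ × ℝ | 0 ≤ q.2 ∧ q.2 ≤ q.1 ∧ q.1 + q.2 ≤ r} := by
    ext ⟨x, y⟩
    simp only [Set.preimage_setOf_eq, Prod.fst_swap, Prod.snd_swap, mem_setOf_eq]
    constructor
    · rintro ⟨h1, h2, h3⟩; exact ⟨h1, h2, by linarith⟩
    · rintro ⟨h1, h2, h3⟩; exact ⟨h1, h2, by linarith⟩
  rw [← hpre, hswap.measure_preimage hmeas.nullMeasurableSet]
  exact volume_T0 hr

lemma mpAffine (a : ℝ) {s : ℝ} (hs : s = 1 ∨ s = -1) :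
    MeasurePreserving (fun x : ℝ => s * (x - a)) volume volume := by
  have hsub : MeasurePreserving (fun x : ℝ => x - a) volume volume :=
    ⟨measurable_id.sub_const a, by
      simp only [sub_eq_add_neg]
      exact map_add_right_eq_self volume (-a)⟩
  rcases hs with rfl | rfl
  · simpa only [one_mul] using hsub
  · have hneg : MeasurePreserving (fun x : ℝ => -x) volume volume :=
      ⟨measurable_neg, Measure.map_neg_eq_self volume⟩
    have h := hneg.comp hsub
    have : ((fun x : ℝ => -x) ∘ fun x : ℝ => x - a) = fun x : ℝ => -1 * (x - a) := by
      funext x; simp only [Function.comp_apply]; ring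
    rwa [this] at h

lemma mpPlane (u : E2) {s t : ℝ} (hs : s = 1 ∨ s = -1) (ht : t = 1 ∨ t = -1) :
    MeasurePreserving (fun p : E2 => (s * (p 0 - u 0), t * (p 1 - u 1))) volume volume := by
  have hmap : MeasurePreserving
      (Prod.map (fun x : ℝ => s * (x - u 0)) (fun y : ℝ => t * (y - u 1))) volume volume := by
    rw [Measure.volume_eq_prod]
    exact (mpAffine (u 0) hs).prod (mpAffine (u 1) ht)
  have h := hmap.comp measurePreserving_Phi
  exact h

lemma volume_triangle_x (u : E2) {s t r : ℝ} (hs : s = 1 ∨ s = -1) (ht : t = 1 ∨ t = -1)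
    (hr : 0 ≤ r) :
    volume {p : E2 | 0 ≤ s * (p 0 - u 0) ∧ s * (p 0 - u 0) ≤ t * (p 1 - u 1) ∧
      s * (p 0 - u 0) + t * (p 1 - u 1) ≤ r} = ENNReal.ofReal (r^2/4) := by
  have hmeas : MeasurableSet {q : ℝ × ℝ | 0 ≤ q.1 ∧ q.1 ≤ q.2 ∧ q.1 + q.2 ≤ r} := by
    refine MeasurableSet.inter ?_ (MeasurableSet.inter ?_ ?_)
    · exact measurableSet_le measurable_const measurable_fst
    · exact measurableSet_le measurable_fst measurable_snd
    · exact measurableSet_le (measurable_fst.add measurable_snd) measurable_const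
  have hset : {p : E2 | 0 ≤ s * (p 0 - u 0) ∧ s * (p 0 - u 0) ≤ t * (p 1 - u 1) ∧
      s * (p 0 - u 0) + t * (p 1 - u 1) ≤ r}
      = (fun p : E2 => (s * (p 0 - u 0), t * (p 1 - u 1)))
        ⁻¹' {q : ℝ × ℝ | 0 ≤ q.1 ∧ q.1 ≤ q.2 ∧ q.1 + q.2 ≤ r} := rfl
  rw [hset, (mpPlane u hs ht).measure_preimage hmeas.nullMeasurableSet]
  exact volume_T0 hr

lemma volume_triangle_y (u : E2) {s t r : ℝ} (hs : s = 1 ∨ s = -1) (ht : t = 1 ∨ t = -1)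
    (hr : 0 ≤ r) :
    volume {p : E2 | 0 ≤ t * (p 1 - u 1) ∧ t * (p 1 - u 1) ≤ s * (p 0 - u 0) ∧
      s * (p 0 - u 0) + t * (p 1 - u 1) ≤ r} = ENNReal.ofReal (r^2/4) := by
  have hmeas : MeasurableSet {q : ℝ × ℝ | 0 ≤ q.2 ∧ q.2 ≤ q.1 ∧ q.1 + q.2 ≤ r} := by
    refine MeasurableSet.inter ?_ (MeasurableSet.inter ?_ ?_)
    · exact measurableSet_le measurable_const measurable_snd
    · exact measurableSet_le measurable_snd measurable_fst
    · exact measurableSet_le (measurable_fst.add measurable_snd) measurable_const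
  have hset : {p : E2 | 0 ≤ t * (p 1 - u 1) ∧ t * (p 1 - u 1) ≤ s * (p 0 - u 0) ∧
      s * (p 0 - u 0) + t * (p 1 - u 1) ≤ r}
      = (fun p : E2 => (s * (p 0 - u 0), t * (p 1 - u 1)))
        ⁻¹' {q : ℝ × ℝ | 0 ≤ q.2 ∧ q.2 ≤ q.1 ∧ q.1 + q.2 ≤ r} := rfl
  rw [hset, (mpPlane u hs ht).measure_preimage hmeas.nullMeasurableSet]
  exact volume_T0' hr

lemma volume_vline (a : ℝ) : volume {p : E2 | p 0 = a} = 0 := by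
  have hmeas : MeasurableSet {q : ℝ × ℝ | q.1 = a} :=
    measurableSet_eq_fun measurable_fst measurable_const
  have hset : {p : E2 | p 0 = a} = Phi ⁻¹' {q : ℝ × ℝ | q.1 = a} := rfl
  rw [hset, measurePreserving_Phi.measure_preimage hmeas.nullMeasurableSet]
  have : {q : ℝ × ℝ | q.1 = a} = ({a} : Set ℝ) ×ˢ (univ : Set ℝ) := by
    ext ⟨x, y⟩; simp [Set.mem_prod, eq_comm]
  rw [this, Measure.volume_eq_prod, Measure.prod_prod, Real.volume_singleton, zero_mul]

lemma volume_hline (a : ℝ) : volume {p : E2 | p 1 = a} = 0 := by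
  have hmeas : MeasurableSet {q : ℝ × ℝ | q.2 = a} :=
    measurableSet_eq_fun measurable_snd measurable_const
  have hset : {p : E2 | p 1 = a} = Phi ⁻¹' {q : ℝ × ℝ | q.2 = a} := rfl
  rw [hset, measurePreserving_Phi.measure_preimage hmeas.nullMeasurableSet]
  have : {q : ℝ × ℝ | q.2 = a} = (univ : Set ℝ) ×ˢ ({a} : Set ℝ) := by
    ext ⟨x, y⟩; simp [Set.mem_prod, eq_comm]
  rw [this, Measure.volume_eq_prod, Measure.prod_prod, Real.volume_singleton, mul_zero]

lemma sqrt2half_nonneg : (0:ℝ) ≤ Real.sqrt 2 / 2 := by positivity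

lemma sqrt2half_sq : (Real.sqrt 2 / 2)^2 = 1/2 := by
  rw [div_pow, Real.sq_sqrt (by norm_num : (0:ℝ) ≤ 2)]; norm_num

lemma volume_rotatedSquare : volume rotatedSquare = 1 := by
  set c : ℝ := Real.sqrt 2 / 2 with hcdef
  have hc0 : 0 ≤ c := sqrt2half_nonneg
  have hc2 : c^2 = 1/2 := sqrt2half_sq
  have hmeas : MeasurableSet {q : ℝ × ℝ | |q.1| + |q.2| ≤ c} :=
    measurableSet_le (measurable_fst.abs.add measurable_snd.abs) measurable_const
  have hset : rotatedSquare = Phi ⁻¹' {q : ℝ × ℝ | |q.1| + |q.2| ≤ c} := rfl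
  rw [hset, measurePreserving_Phi.measure_preimage hmeas.nullMeasurableSet]
  rw [Measure.volume_eq_prod, Measure.prod_apply hmeas]
  have hvol : ∀ x : ℝ, volume (Prod.mk x ⁻¹' {q : ℝ × ℝ | |q.1| + |q.2| ≤ c})
      = ENNReal.ofReal ((c - |x|) + (c - |x|)) := by
    intro x
    have hsec : (Prod.mk x ⁻¹' {q : ℝ × ℝ | |q.1| + |q.2| ≤ c})
        = Icc (-(c - |x|)) (c - |x|) := by
      ext y
      simp only [mem_preimage, mem_setOf_eq, mem_Icc]
      constructor
      · intro h
        have := abs_le.mp (show |y| ≤ c - |x| by linarith)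
        exact this
      · intro h
        have := abs_le.mpr h
        linarith
    rw [hsec, Real.volume_Icc]
    congr 1; ring
  simp_rw [hvol]
  have hsplit := (lintegral_add_compl (μ := volume)
    (fun x : ℝ => ENNReal.ofReal ((c - |x|) + (c - |x|))) (measurableSet_Icc (a := -c) (b := c))).symm
  rw [hsplit]
  have hout : ∫⁻ x in (Icc (-c) c)ᶜ, ENNReal.ofReal ((c - |x|) + (c - |x|)) = 0 := by
    have hz : ∀ x ∈ (Icc (-c) c)ᶜ, ENNReal.ofReal ((c - |x|) + (c - |x|)) = (0 : ENNReal) := by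
      intro x hx
      rw [mem_compl_iff, mem_Icc, not_and_or] at hx
      have : c < |x| := by
        rcases hx with hx | hx
        · push_neg at hx
          rw [abs_of_neg (by linarith)]
          linarith
        · push_neg at hx
          rw [abs_of_pos (by linarith)]
          exact hx
      rw [ENNReal.ofReal_eq_zero]
      linarith
    calc ∫⁻ x in (Icc (-c) c)ᶜ, ENNReal.ofReal ((c - |x|) + (c - |x|))
        = ∫⁻ _ in (Icc (-c) c)ᶜ, (0 : ENNReal) :=
          setLIntegral_congr_fun measurableSet_Icc.compl hz
      _ = 0 := lintegral_zero
  rw [hout, add_zero]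
  have hint : IntegrableOn (fun x => (c - |x|) + (c - |x|)) (Icc (-c) c) volume :=
    (((continuous_const.sub continuous_abs)).add
      ((continuous_const.sub continuous_abs))).integrableOn_Icc
  rw [← ofReal_integral_eq_lintegral_ofReal hint]
  swap
  · rw [EventuallyLE, ae_restrict_iff' measurableSet_Icc]
    refine Filter.Eventually.of_forall fun x hx => ?_
    rcases hx with ⟨h1, h2⟩
    have : |x| ≤ c := abs_le.mpr ⟨h1, h2⟩
    simp only [Pi.zero_apply]
    linarith
  have hval : ∫ x in Icc (-c) c, ((c - |x|) + (c - |x|)) = 2 * c^2 := by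
    rw [integral_Icc_eq_integral_Ioc, ← intervalIntegral.integral_of_le (by linarith : -c ≤ c)]
    have hsplit2 : ∫ x in (-c)..c, ((c - |x|) + (c - |x|))
        = (∫ x in (-c)..(0:ℝ), ((c - |x|) + (c - |x|)))
          + ∫ x in (0:ℝ)..c, ((c - |x|) + (c - |x|)) := by
      rw [intervalIntegral.integral_add_adjacent_intervals] <;>
        exact ((continuous_const.sub continuous_abs).add
          (continuous_const.sub continuous_abs)).intervalIntegrable _ _
    rw [hsplit2]
    have hleft : ∫ x in (-c)..(0:ℝ), ((c - |x|) + (c - |x|)) = c^2 := by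
      have hcongr : ∫ x in (-c)..(0:ℝ), ((c - |x|) + (c - |x|))
          = ∫ x in (-c)..(0:ℝ), ((c + x) + (c + x)) := by
        refine intervalIntegral.integral_congr fun x hx => ?_
        rw [Set.uIcc_of_le (by linarith : -c ≤ 0)] at hx
        rw [abs_of_nonpos (by exact hx.2)]
        ring
      rw [hcongr]
      have : (fun x : ℝ => (c + x) + (c + x)) = fun x : ℝ => 2*c + 2*x := by
        funext x; ring
      rw [this, intervalIntegral.integral_add intervalIntegrable_const
        (intervalIntegral.intervalIntegrable_id.const_mul 2),
        intervalIntegral.integral_const_mul, intervalIntegral.integral_const_mul,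
        integral_id, intervalIntegral.integral_const, smul_eq_mul]
      ring
    have hright : ∫ x in (0:ℝ)..c, ((c - |x|) + (c - |x|)) = c^2 := by
      have hcongr : ∫ x in (0:ℝ)..c, ((c - |x|) + (c - |x|))
          = ∫ x in (0:ℝ)..c, ((c - x) + (c - x)) := by
        refine intervalIntegral.integral_congr fun x hx => ?_
        rw [Set.uIcc_of_le (by linarith : (0:ℝ) ≤ c)] at hx
        rw [abs_of_nonneg (by exact hx.1)]
      rw [hcongr]
      have : (fun x : ℝ => (c - x) + (c - x)) = fun x : ℝ => 2*c - 2*x := by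
        funext x; ring
      rw [this, intervalIntegral.integral_sub intervalIntegrable_const
        (intervalIntegral.intervalIntegrable_id.const_mul 2),
        intervalIntegral.integral_const_mul, intervalIntegral.integral_const_mul,
        integral_id, intervalIntegral.integral_const, smul_eq_mul]
      ring
    rw [hleft, hright]; ring
  rw [hval, hc2]
  norm_num

instance : IsProbabilityMeasure unifD2 := by
  constructor
  rw [unifD2, Measure.restrict_apply_univ, volume_rotatedSquare]

end Aux

section Geometry

open Set

lemma triangle_le_volume {r : ℝ} {T L Tgt : Set E2} (hTL : T \ L ⊆ Tgt) (hL : volume L = 0)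
    (hT : volume T = ENNReal.ofReal (r^2/4)) : ENNReal.ofReal (r^2/4) ≤ volume Tgt := by
  calc ENNReal.ofReal (r^2/4) = volume T := hT.symm
    _ = volume (T \ L) := (measure_diff_null hL).symm
    _ ≤ volume Tgt := measure_mono hTL

/-- The goodness condition: there is room (at least `r`) between `u` and the side of the
square that the cone `q` points towards. -/
def goodPt (q : Fin 4) (u : E2) (r : ℝ) : Prop :=
  (q = 0 → u 0 + u 1 + r ≤ Real.sqrt 2 / 2) ∧
  (q = 1 → -u 0 + u 1 + r ≤ Real.sqrt 2 / 2) ∧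
  (q = 2 → -u 0 - u 1 + r ≤ Real.sqrt 2 / 2) ∧
  (q = 3 → u 0 - u 1 + r ≤ Real.sqrt 2 / 2)

/-- **Key geometric lemma**: for a good point, the cone slab covers at least `r²/4` of the
square. -/
lemma geom (q : Fin 4) (u : E2) (hu : u ∈ rotatedSquare) {r : ℝ} (hr0 : 0 ≤ r)
    (hrc : r ≤ Real.sqrt 2 / 2) (hg : goodPt q u r) :
    ENNReal.ofReal (r^2/4) ≤ volume (coneSlab u q r ∩ rotatedSquare) := by
  obtain ⟨hu1, hu2, hu3, hu4⟩ := mem_rotatedSquare_iff.mp hu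
  fin_cases q
  · -- cone 0 : 0 < Δx, 0 ≤ Δy ; far side is x + y = √2/2
    have hfar : u 0 + u 1 + r ≤ Real.sqrt 2 / 2 := hg.1 rfl
    by_cases hside : u 0 - u 1 + r ≤ Real.sqrt 2 / 2
    · -- triangle 0 ≤ Δy ≤ Δx, Δx + Δy ≤ r
      refine triangle_le_volume (T := {p : E2 | 0 ≤ (1:ℝ) * (p 1 - u 1) ∧
        (1:ℝ) * (p 1 - u 1) ≤ (1:ℝ) * (p 0 - u 0) ∧
        (1:ℝ) * (p 0 - u 0) + (1:ℝ) * (p 1 - u 1) ≤ r}) (L := {p : E2 | p 0 = u 0})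
        ?_ (volume_vline (u 0)) (volume_triangle_y u (Or.inl rfl) (Or.inl rfl) hr0)
      rintro p ⟨⟨h1, h2, h3⟩, hpL⟩
      simp only [one_mul] at h1 h2 h3
      simp only [mem_setOf_eq] at hpL
      have hx : 0 < p 0 - u 0 := lt_of_le_of_ne (le_trans h1 h2) (fun hc => hpL (by linarith))
      refine ⟨⟨inCone_zero.mpr ⟨hx, h1⟩, ?_⟩, ?_⟩
      · refine dist_le_of_coord (a := p 0 - u 0) (b := p 1 - u 1) ?_ ?_ (by linarith)
        · rw [abs_of_pos hx]
        · rw [abs_of_nonneg h1]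
      · exact mem_rotatedSquare_iff.mpr ⟨by linarith, by linarith, by linarith, by linarith⟩
    · -- triangle 0 ≤ Δx ≤ Δy, Δx + Δy ≤ r ; here -u0 + u1 + r ≤ √2/2
      push_neg at hside
      have hside' : -u 0 + u 1 + r ≤ Real.sqrt 2 / 2 := by linarith
      refine triangle_le_volume (T := {p : E2 | 0 ≤ (1:ℝ) * (p 0 - u 0) ∧
        (1:ℝ) * (p 0 - u 0) ≤ (1:ℝ) * (p 1 - u 1) ∧
        (1:ℝ) * (p 0 - u 0) + (1:ℝ) * (p 1 - u 1) ≤ r}) (L := {p : E2 | p 0 = u 0})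
        ?_ (volume_vline (u 0)) (volume_triangle_x u (Or.inl rfl) (Or.inl rfl) hr0)
      rintro p ⟨⟨h1, h2, h3⟩, hpL⟩
      simp only [one_mul] at h1 h2 h3
      simp only [mem_setOf_eq] at hpL
      have hx : 0 < p 0 - u 0 := lt_of_le_of_ne h1 (fun hc => hpL (by linarith))
      refine ⟨⟨inCone_zero.mpr ⟨hx, by linarith⟩, ?_⟩, ?_⟩
      · refine dist_le_of_coord (a := p 0 - u 0) (b := p 1 - u 1) ?_ ?_ (by linarith)
        · rw [abs_of_pos hx]
        · rw [abs_of_nonneg (by linarith : (0:ℝ) ≤ p 1 - u 1)]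
      · exact mem_rotatedSquare_iff.mpr ⟨by linarith, by linarith, by linarith, by linarith⟩
  · -- cone 1 : Δx ≤ 0 < Δy ; far side is -x + y = √2/2
    have hfar : -u 0 + u 1 + r ≤ Real.sqrt 2 / 2 := hg.2.1 rfl
    by_cases hside : -u 0 - u 1 + r ≤ Real.sqrt 2 / 2
    · -- triangle 0 ≤ Δy ≤ -Δx, -Δx + Δy ≤ r
      refine triangle_le_volume (T := {p : E2 | 0 ≤ (1:ℝ) * (p 1 - u 1) ∧
        (1:ℝ) * (p 1 - u 1) ≤ (-1:ℝ) * (p 0 - u 0) ∧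
        (-1:ℝ) * (p 0 - u 0) + (1:ℝ) * (p 1 - u 1) ≤ r}) (L := {p : E2 | p 1 = u 1})
        ?_ (volume_hline (u 1)) (volume_triangle_y u (Or.inr rfl) (Or.inl rfl) hr0)
      rintro p ⟨⟨h1, h2, h3⟩, hpL⟩
      simp only [one_mul, neg_one_mul] at h1 h2 h3
      simp only [mem_setOf_eq] at hpL
      have hy : 0 < p 1 - u 1 := lt_of_le_of_ne h1 (fun hc => hpL (by linarith))
      refine ⟨⟨inCone_one.mpr ⟨by linarith, hy⟩, ?_⟩, ?_⟩
      · refine dist_le_of_coord (a := -(p 0 - u 0)) (b := p 1 - u 1) ?_ ?_ (by linarith)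
        · rw [abs_of_nonpos (by linarith : p 0 - u 0 ≤ 0)]
        · rw [abs_of_pos hy]
      · exact mem_rotatedSquare_iff.mpr ⟨by linarith, by linarith, by linarith, by linarith⟩
    · -- triangle 0 ≤ -Δx ≤ Δy, -Δx + Δy ≤ r ; here u0 + u1 + r ≤ √2/2
      push_neg at hside
      have hside' : u 0 + u 1 + r ≤ Real.sqrt 2 / 2 := by linarith
      refine triangle_le_volume (T := {p : E2 | 0 ≤ (-1:ℝ) * (p 0 - u 0) ∧
        (-1:ℝ) * (p 0 - u 0) ≤ (1:ℝ) * (p 1 - u 1) ∧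
        (-1:ℝ) * (p 0 - u 0) + (1:ℝ) * (p 1 - u 1) ≤ r}) (L := {p : E2 | p 1 = u 1})
        ?_ (volume_hline (u 1)) (volume_triangle_x u (Or.inr rfl) (Or.inl rfl) hr0)
      rintro p ⟨⟨h1, h2, h3⟩, hpL⟩
      simp only [one_mul, neg_one_mul] at h1 h2 h3
      simp only [mem_setOf_eq] at hpL
      have hy : 0 < p 1 - u 1 := lt_of_le_of_ne (le_trans (by linarith) h2)
        (fun hc => hpL (by linarith))
      refine ⟨⟨inCone_one.mpr ⟨by linarith, hy⟩, ?_⟩, ?_⟩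
      · refine dist_le_of_coord (a := -(p 0 - u 0)) (b := p 1 - u 1) ?_ ?_ (by linarith)
        · rw [abs_of_nonpos (by linarith : p 0 - u 0 ≤ 0)]
        · rw [abs_of_pos hy]
      · exact mem_rotatedSquare_iff.mpr ⟨by linarith, by linarith, by linarith, by linarith⟩
  · -- cone 2 : Δx < 0, Δy ≤ 0 ; far side is -x - y = √2/2
    have hfar : -u 0 - u 1 + r ≤ Real.sqrt 2 / 2 := hg.2.2.1 rfl
    by_cases hside : -u 0 + u 1 + r ≤ Real.sqrt 2 / 2
    · -- triangle 0 ≤ -Δy ≤ -Δx, -Δx - Δy ≤ r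
      refine triangle_le_volume (T := {p : E2 | 0 ≤ (-1:ℝ) * (p 1 - u 1) ∧
        (-1:ℝ) * (p 1 - u 1) ≤ (-1:ℝ) * (p 0 - u 0) ∧
        (-1:ℝ) * (p 0 - u 0) + (-1:ℝ) * (p 1 - u 1) ≤ r}) (L := {p : E2 | p 0 = u 0})
        ?_ (volume_vline (u 0)) (volume_triangle_y u (Or.inr rfl) (Or.inr rfl) hr0)
      rintro p ⟨⟨h1, h2, h3⟩, hpL⟩
      simp only [neg_one_mul] at h1 h2 h3
      simp only [mem_setOf_eq] at hpL
      have hx : p 0 - u 0 < 0 := lt_of_le_of_ne (by linarith) (fun hc => hpL (by linarith))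
      refine ⟨⟨inCone_two.mpr ⟨hx, by linarith⟩, ?_⟩, ?_⟩
      · refine dist_le_of_coord (a := -(p 0 - u 0)) (b := -(p 1 - u 1)) ?_ ?_ (by linarith)
        · rw [abs_of_neg hx]
        · rw [abs_of_nonpos (by linarith : p 1 - u 1 ≤ 0)]
      · exact mem_rotatedSquare_iff.mpr ⟨by linarith, by linarith, by linarith, by linarith⟩
    · -- triangle 0 ≤ -Δx ≤ -Δy ; here u0 - u1 + r ≤ √2/2
      push_neg at hside
      have hside' : u 0 - u 1 + r ≤ Real.sqrt 2 / 2 := by linarith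
      refine triangle_le_volume (T := {p : E2 | 0 ≤ (-1:ℝ) * (p 0 - u 0) ∧
        (-1:ℝ) * (p 0 - u 0) ≤ (-1:ℝ) * (p 1 - u 1) ∧
        (-1:ℝ) * (p 0 - u 0) + (-1:ℝ) * (p 1 - u 1) ≤ r}) (L := {p : E2 | p 0 = u 0})
        ?_ (volume_vline (u 0)) (volume_triangle_x u (Or.inr rfl) (Or.inr rfl) hr0)
      rintro p ⟨⟨h1, h2, h3⟩, hpL⟩
      simp only [neg_one_mul] at h1 h2 h3
      simp only [mem_setOf_eq] at hpL
      have hx : p 0 - u 0 < 0 := lt_of_le_of_ne (by linarith) (fun hc => hpL (by linarith))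
      refine ⟨⟨inCone_two.mpr ⟨hx, by linarith⟩, ?_⟩, ?_⟩
      · refine dist_le_of_coord (a := -(p 0 - u 0)) (b := -(p 1 - u 1)) ?_ ?_ (by linarith)
        · rw [abs_of_neg hx]
        · rw [abs_of_nonpos (by linarith : p 1 - u 1 ≤ 0)]
      · exact mem_rotatedSquare_iff.mpr ⟨by linarith, by linarith, by linarith, by linarith⟩
  · -- cone 3 : 0 ≤ Δx, Δy < 0 ; far side is x - y = √2/2
    have hfar : u 0 - u 1 + r ≤ Real.sqrt 2 / 2 := hg.2.2.2 rfl
    by_cases hside : -u 0 - u 1 + r ≤ Real.sqrt 2 / 2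
    · -- triangle 0 ≤ Δx ≤ -Δy, Δx - Δy ≤ r
      refine triangle_le_volume (T := {p : E2 | 0 ≤ (1:ℝ) * (p 0 - u 0) ∧
        (1:ℝ) * (p 0 - u 0) ≤ (-1:ℝ) * (p 1 - u 1) ∧
        (1:ℝ) * (p 0 - u 0) + (-1:ℝ) * (p 1 - u 1) ≤ r}) (L := {p : E2 | p 1 = u 1})
        ?_ (volume_hline (u 1)) (volume_triangle_x u (Or.inl rfl) (Or.inr rfl) hr0)
      rintro p ⟨⟨h1, h2, h3⟩, hpL⟩
      simp only [one_mul, neg_one_mul] at h1 h2 h3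
      simp only [mem_setOf_eq] at hpL
      have hy : p 1 - u 1 < 0 := lt_of_le_of_ne (by linarith) (fun hc => hpL (by linarith))
      refine ⟨⟨inCone_three.mpr ⟨h1, hy⟩, ?_⟩, ?_⟩
      · refine dist_le_of_coord (a := p 0 - u 0) (b := -(p 1 - u 1)) ?_ ?_ (by linarith)
        · rw [abs_of_nonneg h1]
        · rw [abs_of_neg hy]
      · exact mem_rotatedSquare_iff.mpr ⟨by linarith, by linarith, by linarith, by linarith⟩
    · -- triangle 0 ≤ -Δy ≤ Δx ; here u0 + u1 + r ≤ √2/2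
      push_neg at hside
      have hside' : u 0 + u 1 + r ≤ Real.sqrt 2 / 2 := by linarith
      refine triangle_le_volume (T := {p : E2 | 0 ≤ (-1:ℝ) * (p 1 - u 1) ∧
        (-1:ℝ) * (p 1 - u 1) ≤ (1:ℝ) * (p 0 - u 0) ∧
        (1:ℝ) * (p 0 - u 0) + (-1:ℝ) * (p 1 - u 1) ≤ r}) (L := {p : E2 | p 1 = u 1})
        ?_ (volume_hline (u 1)) (volume_triangle_y u (Or.inl rfl) (Or.inr rfl) hr0)
      rintro p ⟨⟨h1, h2, h3⟩, hpL⟩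
      simp only [one_mul, neg_one_mul] at h1 h2 h3
      simp only [mem_setOf_eq] at hpL
      have hy : p 1 - u 1 < 0 := lt_of_le_of_ne (by linarith) (fun hc => hpL (by linarith))
      refine ⟨⟨inCone_three.mpr ⟨by linarith, hy⟩, ?_⟩, ?_⟩
      · refine dist_le_of_coord (a := p 0 - u 0) (b := -(p 1 - u 1)) ?_ ?_ (by linarith)
        · rw [abs_of_nonneg (by linarith : (0:ℝ) ≤ p 0 - u 0)]
        · rw [abs_of_neg hy]
      · exact mem_rotatedSquare_iff.mpr ⟨by linarith, by linarith, by linarith, by linarith⟩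

end Geometry

section Probability

open Set

/-- The bad event for vertex `i` and cone `q`: `X i` is a good point whose cone slab is
avoided by all other points. -/
def Aset (n : ℕ) (i : Fin n) (q : Fin 4) (r : ℝ) : Set (Fin n → E2) :=
  {X | X i ∈ rotatedSquare ∧ goodPt q (X i) r ∧
    ∀ k, k ≠ i → X k ∉ coneSlab (X i) q r}

lemma measurable_XiC {n : ℕ} (i : Fin n) (c : Fin 2) :
    Measurable fun X : Fin n → E2 => X i c :=
  (measurable_coord c).comp (measurable_pi_apply i)

lemma measurableSet_Aset (n : ℕ) (i : Fin n) (q : Fin 4) (r : ℝ) :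
    MeasurableSet (Aset n i q r) := by
  have h1 : MeasurableSet {X : Fin n → E2 | X i ∈ rotatedSquare} :=
    (measurable_pi_apply i) measurableSet_rotatedSquare
  have h2 : MeasurableSet {X : Fin n → E2 | goodPt q (X i) r} := by
    simp only [goodPt, setOf_and]
    refine MeasurableSet.inter ?_ (MeasurableSet.inter ?_ (MeasurableSet.inter ?_ ?_))
    · exact measurableSet_setOf_imp _
        (measurableSet_le (((measurable_XiC i 0).add (measurable_XiC i 1)).add_const r)
          measurable_const)
    · exact measurableSet_setOf_imp _
        (measurableSet_le (((measurable_XiC i 0).neg.add (measurable_XiC i 1)).add_const r)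
          measurable_const)
    · exact measurableSet_setOf_imp _
        (measurableSet_le (((measurable_XiC i 0).neg.sub (measurable_XiC i 1)).add_const r)
          measurable_const)
    · exact measurableSet_setOf_imp _
        (measurableSet_le (((measurable_XiC i 0).sub (measurable_XiC i 1)).add_const r)
          measurable_const)
  have h3 : MeasurableSet {X : Fin n → E2 | ∀ k, k ≠ i → X k ∉ coneSlab (X i) q r} := by
    have : {X : Fin n → E2 | ∀ k, k ≠ i → X k ∉ coneSlab (X i) q r}
        = ⋂ k, {X : Fin n → E2 | k ≠ i → X k ∉ coneSlab (X i) q r} := by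
      ext X; simp only [mem_setOf_eq, mem_iInter]
    rw [this]
    refine MeasurableSet.iInter fun k => ?_
    rcases Classical.em (k = i) with hk | hk
    · have : {X : Fin n → E2 | k ≠ i → X k ∉ coneSlab (X i) q r} = univ := by
        ext X; simp [hk]
      rw [this]; exact MeasurableSet.univ
    · have : {X : Fin n → E2 | k ≠ i → X k ∉ coneSlab (X i) q r}
          = ({X : Fin n → E2 | inCone (X i) (X k) q} ∩
             {X : Fin n → E2 | dist (X i) (X k) ≤ r})ᶜ := by
        ext X; simp only [mem_setOf_eq, mem_compl_iff, mem_inter_iff, coneSlab, hk,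
          ne_eq, not_false_iff, forall_true_left]
      rw [this]
      refine (MeasurableSet.inter ?_ ?_).compl
      · show MeasurableSet {X : Fin n → E2 | inCone (X i) (X k) q}
        simp only [inCone, setOf_or]
        refine MeasurableSet.union ?_ (MeasurableSet.union ?_ (MeasurableSet.union ?_ ?_))
        · exact measurableSet_setOf_and _
            ((measurableSet_lt measurable_const
                ((measurable_XiC k 0).sub (measurable_XiC i 0))).inter
              (measurableSet_le measurable_const
                ((measurable_XiC k 1).sub (measurable_XiC i 1))))
        · exact measurableSet_setOf_and _
            ((measurableSet_le ((measurable_XiC k 0).sub (measurable_XiC i 0))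
                measurable_const).inter
              (measurableSet_lt measurable_const
                ((measurable_XiC k 1).sub (measurable_XiC i 1))))
        · exact measurableSet_setOf_and _
            ((measurableSet_lt ((measurable_XiC k 0).sub (measurable_XiC i 0))
                measurable_const).inter
              (measurableSet_le ((measurable_XiC k 1).sub (measurable_XiC i 1))
                measurable_const))
        · exact measurableSet_setOf_and _
            ((measurableSet_le measurable_const
                ((measurable_XiC k 0).sub (measurable_XiC i 0))).inter
              (measurableSet_lt ((measurable_XiC k 1).sub (measurable_XiC i 1))
                measurable_const))
      · exact measurableSet_le ((measurable_pi_apply i).dist (measurable_pi_apply k))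
          measurable_const
  exact h1.inter (h2.inter h3)

lemma card_ne (n : ℕ) (i : Fin n) : Fintype.card {k : Fin n // ¬ k = i} = n - 1 := by
  classical
  rw [Fintype.card_subtype_compl]
  simp [Fintype.card_subtype_eq]

/-- **Key probabilistic bound.** -/
lemma Pn_Aset_le (n : ℕ) (i : Fin n) (q : Fin 4) {r : ℝ} (hr0 : 0 ≤ r)
    (hrc : r ≤ Real.sqrt 2 / 2) :
    Pn n (Aset n i q r) ≤ (1 - ENNReal.ofReal (r^2/4))^(n-1) := by
  have hA : MeasurableSet (Aset n i q r) := measurableSet_Aset n i q r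
  set F := MeasurableEquiv.piEquivPiSubtypeProd (fun _ : Fin n => E2) (· = i) with hFdef
  have hB : MeasurableSet (F.symm ⁻¹' Aset n i q r) := F.symm.measurable hA
  have hF := measurePreserving_piEquivPiSubtypeProd (fun _ : Fin n => unifD2) (· = i)
  rw [← hFdef] at hF
  have h := hF.measure_preimage hB.nullMeasurableSet
  have hpre : F ⁻¹' (F.symm ⁻¹' Aset n i q r) = Aset n i q r := by
    rw [← Set.preimage_comp]; simp
  rw [hpre, Measure.prod_apply hB] at h
  unfold Pn
  rw [h]
  have happly : ∀ (Y : {k : Fin n // k = i} → E2) (Z : {k : Fin n // ¬ k = i} → E2)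
      (j : Fin n), (F.symm (Y, Z)) j = if h : j = i then Y ⟨j, h⟩ else Z ⟨j, h⟩ := by
    intro Y Z j; rfl
  have hbound : ∀ Y : {k : Fin n // k = i} → E2,
      (Measure.pi fun _ : {k : Fin n // ¬ k = i} => unifD2)
          (Prod.mk Y ⁻¹' (F.symm ⁻¹' Aset n i q r))
        ≤ (1 - ENNReal.ofReal (r^2/4))^(n-1) := by
    intro Y
    set u : E2 := Y ⟨i, rfl⟩ with hu
    by_cases hgood : u ∈ rotatedSquare ∧ goodPt q u r
    · have hsub : Prod.mk Y ⁻¹' (F.symm ⁻¹' Aset n i q r)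
          ⊆ pi univ (fun _ : {k : Fin n // ¬ k = i} => (coneSlab u q r)ᶜ) := by
        intro Z hZ
        have hZ' : F.symm (Y, Z) ∈ Aset n i q r := hZ
        obtain ⟨_, _, h3⟩ := hZ'
        intro k _
        have hki : (k : Fin n) ≠ i := k.2
        have e1 : (F.symm (Y, Z)) i = u := by
          rw [happly, dif_pos rfl]
        have e2 : (F.symm (Y, Z)) k = Z k := by
          rw [happly, dif_neg k.2]
        have h4 := h3 k hki
        rw [e1, e2] at h4
        exact h4
      have hS := measurableSet_coneSlab u q r
      have hSm : ENNReal.ofReal (r^2/4) ≤ unifD2 (coneSlab u q r) := by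
        rw [unifD2, Measure.restrict_apply hS]
        exact geom q u hgood.1 hr0 hrc hgood.2
      calc (Measure.pi fun _ : {k : Fin n // ¬ k = i} => unifD2)
            (Prod.mk Y ⁻¹' (F.symm ⁻¹' Aset n i q r))
          ≤ (Measure.pi fun _ : {k : Fin n // ¬ k = i} => unifD2)
              (pi univ (fun _ : {k : Fin n // ¬ k = i} => (coneSlab u q r)ᶜ)) :=
            measure_mono hsub
        _ = ∏ _k : {k : Fin n // ¬ k = i}, unifD2 (coneSlab u q r)ᶜ := Measure.pi_pi _ _
        _ = (unifD2 (coneSlab u q r)ᶜ) ^ (n - 1) := by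
            rw [Finset.prod_const, Finset.card_univ, Fintype.card_subtype_compl,
              Fintype.card_subtype_eq, Fintype.card_fin]
        _ ≤ (1 - ENNReal.ofReal (r^2/4))^(n-1) := by
            refine pow_le_pow_left' ?_ _
            rw [prob_compl_eq_one_sub hS]
            exact tsub_le_tsub_left hSm 1
    · have hempty : Prod.mk Y ⁻¹' (F.symm ⁻¹' Aset n i q r) = ∅ := by
        ext Z
        simp only [mem_preimage, mem_empty_iff_false, iff_false]
        intro hZ
        obtain ⟨h1, h2, _⟩ := hZ
        have e1 : (F.symm (Y, Z)) i = u := by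
          rw [happly, dif_pos rfl]
        rw [e1] at h1 h2
        exact hgood ⟨h1, h2⟩
      rw [hempty, measure_empty]
      exact zero_le'
  refine le_trans (lintegral_mono hbound) ?_
  rw [lintegral_const, measure_univ, mul_one]

/-- The complement of "all points in the square" is `Pn`-null. -/
lemma Pn_notin_square (n : ℕ) (k : Fin n) :
    Pn n {X : Fin n → E2 | X k ∉ rotatedSquare} = 0 := by
  classical
  have hset : {X : Fin n → E2 | X k ∉ rotatedSquare}
      = pi univ (fun j => if j = k then rotatedSquareᶜ else univ) := by
    ext X
    simp only [mem_setOf_eq, Set.mem_pi, mem_univ, forall_true_left]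
    constructor
    · intro h j
      by_cases hj : j = k
      · subst hj; simp [h]
      · simp [hj]
    · intro h
      have := h k
      simpa using this
  rw [hset, Pn, Measure.pi_pi]
  have hz : unifD2 rotatedSquareᶜ = 0 := by
    rw [unifD2, Measure.restrict_apply measurableSet_rotatedSquare.compl,
      compl_inter_self, measure_empty]
  refine Finset.prod_eq_zero (Finset.mem_univ k) ?_
  simpa using hz

/-- Inclusion of the long-edge event into the union of bad events. -/
lemma event_subset (n : ℕ) {r : ℝ} (hr0 : 0 ≤ r) :
    {X : Fin n → E2 | ∃ i j : Fin n, yaoAdj X i j ∧ r < dist (X i) (X j)}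
      ⊆ (⋃ i : Fin n, ⋃ q : Fin 4, Aset n i q r) ∪
        (⋃ k : Fin n, {X : Fin n → E2 | X k ∉ rotatedSquare}) := by
  intro X hX
  by_cases hall : ∀ k : Fin n, X k ∈ rotatedSquare
  · left
    obtain ⟨i, j, hadj, hdist⟩ := hX
    have main : ∀ i j : Fin n, yaoDir X i j → r < dist (X i) (X j) →
        X ∈ ⋃ i : Fin n, ⋃ q : Fin 4, Aset n i q r := by
      intro i j hdir hdist
      obtain ⟨q, hcone, hmin⟩ := hdir
      refine mem_iUnion.mpr ⟨i, mem_iUnion.mpr ⟨q, ?_⟩⟩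
      have hKj := mem_rotatedSquare_iff.mp (hall j)
      obtain ⟨hj1, hj2, hj3, hj4⟩ := hKj
      have hdd := dist_le_sum_abs (X i) (X j)
      refine ⟨hall i, ?_, ?_⟩
      · -- goodness
        refine ⟨?_, ?_, ?_, ?_⟩ <;> intro hq <;> subst hq
        · rcases inCone_zero.mp hcone with ⟨ha, hb⟩
          rw [abs_of_pos ha, abs_of_nonneg hb] at hdd
          linarith
        · rcases inCone_one.mp hcone with ⟨ha, hb⟩
          rw [abs_of_nonpos ha, abs_of_pos hb] at hdd
          linarith
        · rcases inCone_two.mp hcone with ⟨ha, hb⟩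
          rw [abs_of_neg ha, abs_of_nonpos hb] at hdd
          linarith
        · rcases inCone_three.mp hcone with ⟨ha, hb⟩
          rw [abs_of_nonneg ha, abs_of_neg hb] at hdd
          linarith
      · -- avoidance
        intro k _ hk
        obtain ⟨hkc, hkd⟩ := hk
        have := hmin k hkc
        linarith
    rcases hadj with hdir | hdir
    · exact main i j hdir hdist
    · exact main j i hdir (by rwa [dist_comm] at hdist)
  · right
    push_neg at hall
    obtain ⟨k, hk⟩ := hall
    exact mem_iUnion.mpr ⟨k, hk⟩

end Probability

section Final

open Set

lemma sqrt_half_eq : Real.sqrt (1/2) = Real.sqrt 2 / 2 := by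
  rw [show (1:ℝ)/2 = (Real.sqrt 2 / 2)^2 from sqrt2half_sq.symm,
    Real.sqrt_sq sqrt2half_nonneg]

/-- The bound on the probability, for suitable `n`. -/
lemma Pn_event_le (d : ℝ) (hd : 4 < d) (n : ℕ) (hn1 : 1 ≤ n)
    (hρ : d * Real.log n / n ≤ 1/2) :
    Pn n {X : Fin n → E2 | ∃ i j : Fin n, yaoAdj X i j ∧
        Real.sqrt (d * Real.log n / n) < dist (X i) (X j)}
      ≤ ENNReal.ofReal ((n:ℝ) * (4 * (1 - d * Real.log n / n / 4)^(n-1))) := by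
  set ρ : ℝ := d * Real.log n / n with hρdef
  have hn0 : (0:ℝ) < n := by exact_mod_cast hn1
  have hlog : 0 ≤ Real.log n := Real.log_nonneg (by exact_mod_cast hn1)
  have hρ0 : 0 ≤ ρ := by
    apply div_nonneg (mul_nonneg (by linarith) hlog) (le_of_lt hn0)
  set r : ℝ := Real.sqrt ρ with hrdef
  have hr0 : 0 ≤ r := Real.sqrt_nonneg _
  have hr2 : r^2 = ρ := Real.sq_sqrt hρ0
  have hrc : r ≤ Real.sqrt 2 / 2 := by
    rw [hrdef, ← sqrt_half_eq]
    exact Real.sqrt_le_sqrt hρ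
  have hsub := event_subset n (r := r) hr0
  have hbad : Pn n (⋃ k : Fin n, {X : Fin n → E2 | X k ∉ rotatedSquare}) = 0 :=
    measure_iUnion_null fun k => Pn_notin_square n k
  have step1 : Pn n {X : Fin n → E2 | ∃ i j : Fin n, yaoAdj X i j ∧
        r < dist (X i) (X j)}
      ≤ Pn n (⋃ i : Fin n, ⋃ q : Fin 4, Aset n i q r) := by
    calc Pn n _ ≤ Pn n ((⋃ i : Fin n, ⋃ q : Fin 4, Aset n i q r) ∪
          (⋃ k : Fin n, {X : Fin n → E2 | X k ∉ rotatedSquare})) := measure_mono hsub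
      _ ≤ Pn n (⋃ i : Fin n, ⋃ q : Fin 4, Aset n i q r) +
          Pn n (⋃ k : Fin n, {X : Fin n → E2 | X k ∉ rotatedSquare}) := measure_union_le _ _
      _ = Pn n (⋃ i : Fin n, ⋃ q : Fin 4, Aset n i q r) := by rw [hbad, add_zero]
  set Bnd : ENNReal := (1 - ENNReal.ofReal (r^2/4))^(n-1) with hBnd
  have step2 : Pn n (⋃ i : Fin n, ⋃ q : Fin 4, Aset n i q r) ≤ (n : ENNReal) * (4 * Bnd) := by
    have h2 : ∀ i : Fin n, Pn n (⋃ q : Fin 4, Aset n i q r) ≤ 4 * Bnd := by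
      intro i
      calc Pn n (⋃ q : Fin 4, Aset n i q r) ≤ ∑' q : Fin 4, Pn n (Aset n i q r) :=
            measure_iUnion_le _
        _ ≤ ∑' _q : Fin 4, Bnd := ENNReal.tsum_le_tsum (fun q => Pn_Aset_le n i q hr0 hrc)
        _ = 4 * Bnd := by
            rw [tsum_fintype, Finset.sum_const, Finset.card_univ, Fintype.card_fin,
              nsmul_eq_mul]
            norm_num
    calc Pn n (⋃ i : Fin n, ⋃ q : Fin 4, Aset n i q r)
        ≤ ∑' i : Fin n, Pn n (⋃ q : Fin 4, Aset n i q r) := measure_iUnion_le _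
      _ ≤ ∑' _i : Fin n, 4 * Bnd := ENNReal.tsum_le_tsum h2
      _ = (n : ENNReal) * (4 * Bnd) := by
          rw [tsum_fintype, Finset.sum_const, Finset.card_univ, Fintype.card_fin,
            nsmul_eq_mul]
  have hρ41 : ρ/4 ≤ 1 := by linarith
  have hρ40 : 0 ≤ ρ/4 := by linarith
  have h1ρ : 0 ≤ 1 - ρ/4 := by linarith
  have hBnd_eq : Bnd = ENNReal.ofReal ((1 - ρ/4)^(n-1)) := by
    rw [hBnd, hr2, ENNReal.ofReal_pow h1ρ, ENNReal.ofReal_sub _ hρ40, ENNReal.ofReal_one]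
  have final : (n : ENNReal) * (4 * Bnd)
      = ENNReal.ofReal ((n:ℝ) * (4 * (1 - ρ/4)^(n-1))) := by
    rw [hBnd_eq, ENNReal.ofReal_mul (by positivity), ENNReal.ofReal_mul (by norm_num : (0:ℝ) ≤ 4)]
    rw [ENNReal.ofReal_natCast]
    norm_num
  have goal1 : Pn n {X : Fin n → E2 | ∃ i j : Fin n, yaoAdj X i j ∧
      r < dist (X i) (X j)} ≤ ENNReal.ofReal ((n:ℝ) * (4 * (1 - ρ/4)^(n-1))) := by
    rw [← final]
    exact le_trans step1 step2
  have heq : (1 - ρ/4) = (1 - d * Real.log n / n / 4) := by rw [hρdef]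
  rw [← heq]
  exact goal1

/-- For every `d > 4`, the probability that some edge of the
`(π/2)`-Yao graph of `n` i.i.d. uniform points in `𝔻²` has Euclidean length greater
than `√(d log n / n)` tends to `0`. -/
theorem yao_max_edge_length (d : ℝ) (hd : 4 < d) :
    Tendsto
      (fun n : ℕ => Pn n {X : Fin n → E2 |
        ∃ i j : Fin n, yaoAdj X i j ∧
          Real.sqrt (d * Real.log n / n) < dist (X i) (X j)})
      atTop (nhds 0) := by
  have hd0 : (0:ℝ) < d := by linarith
  set β : ℝ := (1 + d/4)/2 with hβdef
  have hβ1 : 1 < β := by rw [hβdef]; linarith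
  have hβd : β < d/4 := by rw [hβdef]; linarith
  set ε : ℝ := 1 - β/(d/4) with hεdef
  have hd4 : (0:ℝ) < d/4 := by linarith
  have hε : 0 < ε := by
    rw [hεdef]
    have : β/(d/4) < 1 := (div_lt_one hd4).mpr hβd
    linarith
  -- eventual hypotheses
  have hev1 : ∀ᶠ n : ℕ in atTop, 1 ≤ n := eventually_ge_atTop 1
  have hlogdiv : Tendsto (fun n : ℕ => d * Real.log n / n) atTop (nhds 0) := by
    have h0 : Tendsto (fun x : ℝ => Real.log x / x) atTop (nhds 0) :=
      Real.isLittleO_log_id_atTop.tendsto_div_nhds_zero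
    have h1 : Tendsto (fun n : ℕ => Real.log n / (n:ℝ)) atTop (nhds 0) :=
      h0.comp tendsto_natCast_atTop_atTop
    have h2 := h1.const_mul d
    simpa [mul_div_assoc] using h2
  have hev2 : ∀ᶠ n : ℕ in atTop, d * Real.log n / n ≤ 1/2 :=
    hlogdiv.eventually (eventually_le_nhds (by norm_num))
  have hev3 : ∀ᶠ n : ℕ in atTop, 1/(n:ℝ) ≤ ε :=
    tendsto_one_div_atTop_nhds_zero_nat.eventually (eventually_le_nhds hε)
  -- real-valued bound
  set g : ℕ → ℝ := fun n => (n:ℝ) * (4 * (1 - d * Real.log n / n / 4)^(n-1)) with hgdef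
  have hgle : ∀ᶠ n : ℕ in atTop, g n ≤ 4 * (n:ℝ)^((1:ℝ) - β) := by
    filter_upwards [hev1, hev2, hev3, eventually_ge_atTop 2] with n hn1 hρ h1n hn2
    set ρ : ℝ := d * Real.log n / n with hρdef
    have hn0 : (0:ℝ) < n := by positivity
    have hlog : 0 ≤ Real.log n := Real.log_nonneg (by exact_mod_cast hn1)
    have hρ0 : 0 ≤ ρ := by positivity
    set c : ℝ := ρ/4 with hcdef
    have hc0 : 0 ≤ c := by positivity
    have hc1 : 1 - c ≤ Real.exp (-c) := by
      have := Real.add_one_le_exp (-c)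
      linarith
    have hm : ((n - 1 : ℕ) : ℝ) = (n:ℝ) - 1 := by
      rw [Nat.cast_sub hn1]; norm_num
    have hpow : (1 - c)^(n-1) ≤ Real.exp (-c)^(n-1) := by
      apply pow_le_pow_left₀ (by linarith [hρ]) hc1
    have hexp : Real.exp (-c)^(n-1) = Real.exp (-(c * ((n:ℝ) - 1))) := by
      rw [← Real.exp_nat_mul, ← hm]; ring_nf
    have hcm : β * Real.log n ≤ c * ((n:ℝ) - 1) := by
      have h1 : c * ((n:ℝ) - 1) = (d/4) * (1 - 1/(n:ℝ)) * Real.log n := by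
        rw [hcdef, hρdef]; field_simp
      have h2 : β ≤ (d/4) * (1 - 1/(n:ℝ)) := by
        have h3 : 1 - ε ≤ 1 - 1/(n:ℝ) := by linarith
        have h4 : (d/4) * (1 - ε) = β := by
          rw [hεdef]; field_simp; ring
        nlinarith [h1n]
      rw [h1]
      exact mul_le_mul_of_nonneg_right h2 hlog
    have hexp2 : Real.exp (-(c * ((n:ℝ) - 1))) ≤ Real.exp (-(β * Real.log n)) := by
      apply Real.exp_le_exp.mpr; linarith
    have hrpow : Real.exp (-(β * Real.log n)) = (n:ℝ)^(-β) := by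
      rw [Real.rpow_def_of_pos hn0]; ring_nf
    have hfinal : (n:ℝ) * (4 * (n:ℝ)^(-β)) = 4 * (n:ℝ)^((1:ℝ)-β) := by
      rw [show (1:ℝ) - β = 1 + (-β) by ring, Real.rpow_add hn0, Real.rpow_one]; ring
    calc g n = (n:ℝ) * (4 * (1 - c)^(n-1)) := by rw [hgdef]
      _ ≤ (n:ℝ) * (4 * (n:ℝ)^(-β)) := by
          have : (1 - c)^(n-1) ≤ (n:ℝ)^(-β) := by
            calc (1 - c)^(n-1) ≤ Real.exp (-c)^(n-1) := hpow
              _ = Real.exp (-(c * ((n:ℝ) - 1))) := hexp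
              _ ≤ Real.exp (-(β * Real.log n)) := hexp2
              _ = (n:ℝ)^(-β) := hrpow
          have h4 : (0:ℝ) ≤ 4 := by norm_num
          nlinarith [hn0, this]
      _ = 4 * (n:ℝ)^((1:ℝ)-β) := hfinal
  have hg0 : ∀ᶠ n : ℕ in atTop, 0 ≤ g n := by
    filter_upwards [hev2] with n hρ
    have : (0:ℝ) ≤ 1 - d * Real.log n / n / 4 := by linarith
    positivity
  have hblim : Tendsto (fun n : ℕ => 4 * (n:ℝ)^((1:ℝ) - β)) atTop (nhds 0) := by
    have h1 : Tendsto (fun x : ℝ => x^(-(β-1))) atTop (nhds 0) :=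
      tendsto_rpow_neg_atTop (by linarith)
    have h2 : Tendsto (fun n : ℕ => ((n:ℝ))^(-(β-1))) atTop (nhds 0) :=
      h1.comp tendsto_natCast_atTop_atTop
    have h3 : Tendsto (fun n : ℕ => 4 * ((n:ℝ))^(-(β-1))) atTop (nhds 0) := by
      have := h2.const_mul (4:ℝ)
      simpa using this
    have : (fun n : ℕ => 4 * ((n:ℝ))^((1:ℝ)-β)) = fun n : ℕ => 4 * ((n:ℝ))^(-(β-1)) := by
      funext n; norm_num
    rw [this]
    exact h3
  have hglim : Tendsto g atTop (nhds 0) := squeeze_zero' hg0 hgle hblim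
  have hENN : Tendsto (fun n : ℕ => ENNReal.ofReal (g n)) atTop (nhds 0) := by
    have := ENNReal.tendsto_ofReal hglim
    rwa [ENNReal.ofReal_zero] at this
  refine tendsto_of_tendsto_of_tendsto_of_le_of_le' tendsto_const_nhds hENN
    (Filter.Eventually.of_forall fun n => zero_le') ?_
  filter_upwards [hev1, hev2] with n hn1 hρ
  exact Pn_event_le d hd n hn1 hρ

end Final

end
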